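/- Let (X,d) be a proper geodesic metric space, φ : X → ℝ a Kantorovich potential, and s, t ∈ (0,1). If γ¹, γ² are φ-Kantorovich geodesics with γ¹_t = γ²_t, then φ_s(γ¹_s) = φ_s(γ²_s). Consequently, for a_s ≠ b_s, no point of X is simultaneously the time-t point of a φ-Kantorovich geodesic γ with φ_s(γ_s) = a_s and of one with φ_s(γ_s) = b_s. -/

import Mathlib

/-- `ψ` is pointwise the `c`-transform of `φ` for the cost `c = d²/2`:
at every point `x`, `ψ x` is a genuine (finite) infimum of `d(x,y)²/2 - φ(y)` over `y`. -/
def IsCTransform {X : Type*} [MetricSpace X] (φ ψ : X → ℝ) : Prop :=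
  ∀ x : X, IsGLB {v : ℝ | ∃ y : X, v = dist x y ^ 2 / 2 - φ y} (ψ x)

/-- `φ` is a Kantorovich potential with (real-valued) conjugate potential `φc`. -/
def IsKantorovichPair {X : Type*} [MetricSpace X] (φ φc : X → ℝ) : Prop :=
  IsCTransform φ φc ∧ IsCTransform φc φ

/-- A constant-speed geodesic parametrized on `[0,1]`. -/
def IsGeodesic {X : Type*} [MetricSpace X] (γ : ℝ → X) : Prop :=
  ∀ s ∈ Set.Icc (0:ℝ) 1, ∀ t ∈ Set.Icc (0:ℝ) 1,
    dist (γ s) (γ t) = |s - t| * dist (γ 0) (γ 1)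

/-- A `φ`-Kantorovich geodesic: a geodesic with `φ(γ₀) + φ^c(γ₁) = ℓ(γ)²/2`,
where `ℓ(γ) = d(γ₀,γ₁)`. -/
def IsKantorovichGeodesic {X : Type*} [MetricSpace X] (φ φc : X → ℝ) (γ : ℝ → X) : Prop :=
  IsGeodesic γ ∧ φ (γ 0) + φc (γ 1) = dist (γ 0) (γ 1) ^ 2 / 2

/-- A metric space is geodesic if every pair of points is joined by a geodesic. -/
def IsGeodesicSpace (X : Type*) [MetricSpace X] : Prop :=
  ∀ x y : X, ∃ γ : ℝ → X, IsGeodesic γ ∧ γ 0 = x ∧ γ 1 = y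

/-- The interpolating intermediate-time Kantorovich potential
`φ_t(x) = -inf_y (d(x,y)²/(2t) - φ(y))` for `t ≠ 0`, and `φ_0 = φ`. -/
noncomputable def interpPotential {X : Type*} [MetricSpace X] (φ : X → ℝ) (t : ℝ) (x : X) : ℝ :=
  if t = 0 then φ x
  else -sInf {v : ℝ | ∃ y : X, v = dist x y ^ 2 / (2 * t) - φ y}

/-- The time-reversed interpolating Kantorovich potential
`φ̄_t(x) = inf_y (d(x,y)²/(2(1-t)) - φ^c(y))` for `t ≠ 1`, and `φ̄_1 = -φ^c`. -/
noncomputable def reversePotential {X : Type*} [MetricSpace X] (φc : X → ℝ) (t : ℝ) (x : X) : ℝ :=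
  if t = 1 then -φc x
  else sInf {v : ℝ | ∃ y : X, v = dist x y ^ 2 / (2 * (1 - t)) - φc y}

/-- On a proper geodesic space, for `s, t ∈ (0,1)`: if two `φ`-Kantorovich geodesics agree
at time `t`, then `φ_s` takes the same value at their time-`s` points. Consequently, for
`a ≠ b` no point of `X` is simultaneously the time-`t` point of a `φ`-Kantorovich geodesic
with `φ_s(γ_s) = a` and of one with `φ_s(γ_s) = b`. -/
lemma keyA {X : Type*} [MetricSpace X] (φ φc : X → ℝ) (hpair : IsKantorovichPair φ φc)
    (γ : ℝ → X) (hγ : IsKantorovichGeodesic φ φc γ) (r : ℝ) (hr : r ∈ Set.Ioo (0:ℝ) 1) :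
    interpPotential φ r (γ r) = φ (γ 0) - r * dist (γ 0) (γ 1) ^ 2 / 2 := by
  obtain ⟨hgeod, hk⟩ := hγ
  have hr0 : (0:ℝ) < r := hr.1
  have hr1 : r < 1 := hr.2
  set ℓ := dist (γ 0) (γ 1) with hℓ
  have hℓ0 : 0 ≤ ℓ := dist_nonneg
  have hrI : r ∈ Set.Icc (0:ℝ) 1 := ⟨hr0.le, hr1.le⟩
  have h0I : (0:ℝ) ∈ Set.Icc (0:ℝ) 1 := ⟨le_refl 0, zero_le_one⟩
  have h1I : (1:ℝ) ∈ Set.Icc (0:ℝ) 1 := ⟨zero_le_one, le_refl 1⟩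
  have hx0 : dist (γ r) (γ 0) = r * ℓ := by
    rw [hgeod r hrI 0 h0I, sub_zero, abs_of_pos hr0]
  have hx1 : dist (γ r) (γ 1) = (1 - r) * ℓ := by
    rw [hgeod r hrI 1 h1I, abs_of_neg (by linarith : r - 1 < 0)]; ring_nf; rfl
  have hφc1 : φc (γ 1) = ℓ ^ 2 / 2 - φ (γ 0) := by linarith
  have hleast : IsLeast {v : ℝ | ∃ y : X, v = dist (γ r) y ^ 2 / (2 * r) - φ y}
      (r * ℓ ^ 2 / 2 - φ (γ 0)) := by
    constructor
    · refine ⟨γ 0, ?_⟩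
      rw [hx0]
      field_simp
    · rintro v ⟨y, rfl⟩
      have hy : φ y ≤ dist y (γ 1) ^ 2 / 2 - φc (γ 1) :=
        (hpair.2 y).1 ⟨γ 1, rfl⟩
      have htri : dist y (γ 1) ≤ dist (γ r) y + (1 - r) * ℓ := by
        calc dist y (γ 1) ≤ dist y (γ r) + dist (γ r) (γ 1) := dist_triangle _ _ _
        _ = dist (γ r) y + (1 - r) * ℓ := by rw [dist_comm y, hx1]
      have hd0 : 0 ≤ dist (γ r) y := dist_nonneg
      have hsq : dist y (γ 1) ^ 2 ≤ (dist (γ r) y + (1 - r) * ℓ) ^ 2 := by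
        apply pow_le_pow_left₀ dist_nonneg htri 2
      rw [hφc1] at hy
      have hkey : 0 ≤ (1 - r) * (dist (γ r) y - r * ℓ) ^ 2 :=
        mul_nonneg (by linarith) (sq_nonneg _)
      have h2r : (0:ℝ) < 2 * r := by linarith
      have hD : dist (γ r) y ^ 2 / (2 * r) * (2 * r) = dist (γ r) y ^ 2 := by
        field_simp
      nlinarith [hkey, hD, h2r, hy, hsq]
  rw [interpPotential, if_neg (ne_of_gt hr0), hleast.csInf_eq]
  ring

theorem statement6 {X : Type*} [MetricSpace X] [ProperSpace X]
    (hgeo : IsGeodesicSpace X) (φ φc : X → ℝ) (hpair : IsKantorovichPair φ φc)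
    (s t : ℝ) (hs : s ∈ Set.Ioo (0:ℝ) 1) (ht : t ∈ Set.Ioo (0:ℝ) 1) :
    (∀ γ₁ γ₂ : ℝ → X, IsKantorovichGeodesic φ φc γ₁ → IsKantorovichGeodesic φ φc γ₂ →
        γ₁ t = γ₂ t → interpPotential φ s (γ₁ s) = interpPotential φ s (γ₂ s)) ∧
      (∀ a b : ℝ, a ≠ b → ¬∃ x : X,
        (∃ γ : ℝ → X, IsKantorovichGeodesic φ φc γ ∧ γ t = x ∧
          interpPotential φ s (γ s) = a) ∧
        (∃ γ : ℝ → X, IsKantorovichGeodesic φ φc γ ∧ γ t = x ∧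
          interpPotential φ s (γ s) = b)) := by
  have main : ∀ γ₁ γ₂ : ℝ → X, IsKantorovichGeodesic φ φc γ₁ → IsKantorovichGeodesic φ φc γ₂ →
      γ₁ t = γ₂ t → interpPotential φ s (γ₁ s) = interpPotential φ s (γ₂ s) := by
    intro γ₁ γ₂ h1 h2 heq
    have ht0 : (0:ℝ) < t := ht.1
    have ht1 : t < 1 := ht.2
    have htI : t ∈ Set.Icc (0:ℝ) 1 := ⟨ht0.le, ht1.le⟩
    have h0I : (0:ℝ) ∈ Set.Icc (0:ℝ) 1 := ⟨le_refl 0, zero_le_one⟩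
    have h1I : (1:ℝ) ∈ Set.Icc (0:ℝ) 1 := ⟨zero_le_one, le_refl 1⟩
    set a := dist (γ₁ 0) (γ₁ 1) with hadef
    set b := dist (γ₂ 0) (γ₂ 1) with hbdef
    have ha0 : 0 ≤ a := dist_nonneg
    have hb0 : 0 ≤ b := dist_nonneg
    have d10 : dist (γ₁ 0) (γ₁ t) = t * a := by
      rw [h1.1 0 h0I t htI, zero_sub, abs_neg, abs_of_pos ht0]
    have d11 : dist (γ₁ t) (γ₁ 1) = (1 - t) * a := by
      rw [h1.1 t htI 1 h1I, abs_of_neg (by linarith : t - 1 < 0)]; ring_nf; rfl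
    have d20 : dist (γ₂ 0) (γ₂ t) = t * b := by
      rw [h2.1 0 h0I t htI, zero_sub, abs_neg, abs_of_pos ht0]
    have d21 : dist (γ₂ t) (γ₂ 1) = (1 - t) * b := by
      rw [h2.1 t htI 1 h1I, abs_of_neg (by linarith : t - 1 < 0)]; ring_nf; rfl
    -- cross inequalities
    have c1 : φ (γ₁ 0) ≤ dist (γ₁ 0) (γ₂ 1) ^ 2 / 2 - φc (γ₂ 1) :=
      (hpair.2 (γ₁ 0)).1 ⟨γ₂ 1, rfl⟩
    have c2 : φ (γ₂ 0) ≤ dist (γ₂ 0) (γ₁ 1) ^ 2 / 2 - φc (γ₁ 1) :=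
      (hpair.2 (γ₂ 0)).1 ⟨γ₁ 1, rfl⟩
    have tri1 : dist (γ₁ 0) (γ₂ 1) ≤ t * a + (1 - t) * b := by
      calc dist (γ₁ 0) (γ₂ 1) ≤ dist (γ₁ 0) (γ₁ t) + dist (γ₁ t) (γ₂ 1) := dist_triangle _ _ _
      _ = t * a + (1 - t) * b := by rw [d10, heq, d21]
    have tri2 : dist (γ₂ 0) (γ₁ 1) ≤ t * b + (1 - t) * a := by
      calc dist (γ₂ 0) (γ₁ 1) ≤ dist (γ₂ 0) (γ₂ t) + dist (γ₂ t) (γ₁ 1) := dist_triangle _ _ _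
      _ = t * b + (1 - t) * a := by rw [d20, ← heq, d11]
    have sq1 : dist (γ₁ 0) (γ₂ 1) ^ 2 ≤ (t * a + (1 - t) * b) ^ 2 :=
      pow_le_pow_left₀ dist_nonneg tri1 2
    have sq2 : dist (γ₂ 0) (γ₁ 1) ^ 2 ≤ (t * b + (1 - t) * a) ^ 2 :=
      pow_le_pow_left₀ dist_nonneg tri2 2
    have hk1 : φ (γ₁ 0) + φc (γ₁ 1) = a ^ 2 / 2 := h1.2
    have hk2 : φ (γ₂ 0) + φc (γ₂ 1) = b ^ 2 / 2 := h2.2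
    have hsqab : (a - b) ^ 2 ≤ 0 := by
      nlinarith [mul_pos ht0 (by linarith : (0:ℝ) < 1 - t)]
    have hab : a = b := by
      have : (a - b) ^ 2 = 0 := le_antisymm hsqab (sq_nonneg _)
      have := pow_eq_zero_iff (n := 2) (by norm_num) |>.mp this
      linarith [sub_eq_zero.mp this]
    have e1t := keyA φ φc hpair γ₁ h1 t ht
    have e2t := keyA φ φc hpair γ₂ h2 t ht
    rw [heq, e2t] at e1t
    have hφ0 : φ (γ₁ 0) = φ (γ₂ 0) := by
      rw [← hadef, ← hbdef, hab] at e1t; linarith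
    rw [keyA φ φc hpair γ₁ h1 s hs, keyA φ φc hpair γ₂ h2 s hs, ← hadef, ← hbdef, hab, hφ0]
  refine ⟨main, ?_⟩
  rintro a b hab ⟨x, ⟨γ₁, hγ₁, hx1, ha⟩, ⟨γ₂, hγ₂, hx2, hb⟩⟩
  exact hab (by rw [← ha, ← hb]; exact main γ₁ γ₂ hγ₁ hγ₂ (hx1.trans hx2.symm))
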